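/- arXiv:1107.0184 — 2 statements merged into one kernel-verified Lean document; each statement's English description precedes it below -/
import Mathlib

section
/- Let f : ℝ → ℂ be defined by f(x) = Σ_{k=1}^∞ 2^{−k} e^{2πi 2^k x}. Then there exists an absolute constant C such that |f(x+y) + f(x−y) − 2f(x)| ≤ C|y| for all x, y ∈ ℝ. -/
/-- The lacunary series `f(x) = Σ_{k=1}^∞ 2^{−k} e^{2πi 2^k x}`. -/
noncomputable def lacunary (x : ℝ) : ℂ :=
  ∑' k : ℕ, ((1 : ℂ) / 2) ^ (k + 1) *
    Complex.exp (2 * Real.pi * Complex.I * (2 : ℂ) ^ (k + 1) * x)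

namespace Lac17

noncomputable def a (x : ℝ) (k : ℕ) : ℂ :=
  ((1 : ℂ) / 2) ^ (k + 1) *
    Complex.exp (2 * Real.pi * Complex.I * (2 : ℂ) ^ (k + 1) * x)

lemma norm_a (x : ℝ) (k : ℕ) : ‖a x k‖ = (1 / 2 : ℝ) ^ (k + 1) := by
  have harg : (2 * Real.pi * Complex.I * (2 : ℂ) ^ (k + 1) * x) =
      ((2 * Real.pi * 2 ^ (k + 1) * x : ℝ) : ℂ) * Complex.I := by
    push_cast; ring
  rw [a, norm_mul, harg, Complex.norm_exp_ofReal_mul_I]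
  simp [norm_pow]

lemma summable_a (x : ℝ) : Summable (a x) := by
  apply Summable.of_norm
  simp only [norm_a]
  exact (summable_geometric_of_lt_one (by norm_num) (by norm_num)).comp_injective
    (add_left_injective 1)

lemma one_sub_cos_le (t : ℝ) : 1 - Real.cos t ≤ t ^ 2 / 2 := by
  have h1 : Real.cos t = Real.cos (t / 2) ^ 2 - Real.sin (t / 2) ^ 2 := by
    rw [← Real.cos_two_mul']; ring_nf
  have h2 : Real.sin (t / 2) ^ 2 ≤ (t / 2) ^ 2 := Real.sin_sq_le_sq
  have h3 := Real.sin_sq_add_cos_sq (t / 2)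
  nlinarith

lemma key_norm (x y : ℝ) (k : ℕ) :
    ‖a (x + y) k + a (x - y) k - 2 * a x k‖ =
      (1 / 2 : ℝ) ^ (k + 1) * (2 - 2 * Real.cos (2 * Real.pi * 2 ^ (k + 1) * y)) := by
  set t : ℝ := 2 * Real.pi * 2 ^ (k + 1) * y with ht
  have hxpy : a (x + y) k = a x k * Complex.exp ((t : ℂ) * Complex.I) := by
    have harg : (2 * (Real.pi:ℂ) * Complex.I * (2:ℂ) ^ (k+1) * ((x + y : ℝ):ℂ)) =
        2 * (Real.pi:ℂ) * Complex.I * (2:ℂ) ^ (k+1) * (x:ℂ) + (t : ℂ) * Complex.I := by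
      push_cast [ht]; ring
    rw [a, a, harg, Complex.exp_add]; ring
  have hxmy : a (x - y) k = a x k * Complex.exp ((-t : ℂ) * Complex.I) := by
    have harg : (2 * (Real.pi:ℂ) * Complex.I * (2:ℂ) ^ (k+1) * ((x - y : ℝ):ℂ)) =
        2 * (Real.pi:ℂ) * Complex.I * (2:ℂ) ^ (k+1) * (x:ℂ) + (-t : ℂ) * Complex.I := by
      push_cast [ht]; ring
    rw [a, a, harg, Complex.exp_add]; ring
  have hsum : a (x + y) k + a (x - y) k - 2 * a x k =
      a x k * (((2 * Real.cos t - 2 : ℝ) : ℂ)) := by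
    rw [hxpy, hxmy, Complex.exp_mul_I, Complex.exp_mul_I]
    rw [Complex.cos_neg, Complex.sin_neg]
    push_cast [Complex.ofReal_cos]
    ring
  rw [hsum, norm_mul, norm_a, Complex.norm_real, Real.norm_eq_abs,
    abs_of_nonpos (by nlinarith [Real.cos_le_one t] : 2 * Real.cos t - 2 ≤ 0)]
  ring

lemma key_le_four (x y : ℝ) (k : ℕ) :
    ‖a (x + y) k + a (x - y) k - 2 * a x k‖ ≤ 4 * (1 / 2 : ℝ) ^ (k + 1) := by
  rw [key_norm]
  have h := Real.neg_one_le_cos (2 * Real.pi * 2 ^ (k + 1) * y)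
  have hp : (0:ℝ) ≤ (1 / 2 : ℝ) ^ (k + 1) := by positivity
  nlinarith

lemma key_le_sq (x y : ℝ) (k : ℕ) :
    ‖a (x + y) k + a (x - y) k - 2 * a x k‖ ≤ 4 * Real.pi ^ 2 * 2 ^ (k + 1) * y ^ 2 := by
  rw [key_norm]
  have h := one_sub_cos_le (2 * Real.pi * 2 ^ (k + 1) * y)
  have hp : (0:ℝ) < (2:ℝ) ^ (k + 1) := by positivity
  have hhalf : ((1 / 2 : ℝ)) ^ (k + 1) = ((2:ℝ) ^ (k+1))⁻¹ := by
    rw [one_div, inv_pow]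
  rw [hhalf]
  rw [inv_mul_le_iff₀ hp]
  have expand : (2 * Real.pi * 2 ^ (k + 1) * y) ^ 2 =
      4 * Real.pi ^ 2 * (2 ^ (k+1) * 2 ^ (k+1)) * y ^ 2 := by ring
  nlinarith [sq_nonneg ((2:ℝ)^(k+1)), Real.pi_pos, sq_nonneg y]

lemma summable_g (x y : ℝ) :
    Summable (fun k => ‖a (x + y) k + a (x - y) k - 2 * a x k‖) := by
  apply Summable.of_nonneg_of_le (fun k => norm_nonneg _) (key_le_four x y)
  exact (((summable_geometric_of_lt_one (by norm_num) (by norm_num)).comp_injective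
    (add_left_injective 1)).mul_left 4)

lemma main_eq (x y : ℝ) :
    lacunary (x + y) + lacunary (x - y) - 2 * lacunary x =
      ∑' k, (a (x + y) k + a (x - y) k - 2 * a x k) := by
  have h1 := summable_a (x + y)
  have h2 := summable_a (x - y)
  have h3 := summable_a x
  have : lacunary (x+y) = ∑' k, a (x+y) k := rfl
  rw [this, show lacunary (x-y) = ∑' k, a (x-y) k from rfl,
    show lacunary x = ∑' k, a x k from rfl,
    ← tsum_mul_left, ← h1.tsum_add h2, ← (h1.add h2).tsum_sub (h3.mul_left 2)]

end Lac17

open Lac17 in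
theorem stmt_17 :
    ∃ C : ℝ, ∀ x y : ℝ,
      ‖lacunary (x + y) + lacunary (x - y) - 2 * lacunary x‖ ≤ C * |y| := by
  classical
  refine ⟨8 * Real.pi ^ 2 + 8, fun x y => ?_⟩
  have hC : (0:ℝ) < 8 * Real.pi ^ 2 + 8 := by positivity
  rcases eq_or_ne y 0 with rfl | hy
  · simp only [add_zero, sub_zero, abs_zero, mul_zero]
    have : lacunary x + lacunary x - 2 * lacunary x = 0 := by ring
    rw [this, norm_zero]
  have hy0 : 0 < |y| := abs_pos.2 hy
  set g : ℕ → ℝ := fun k => ‖a (x + y) k + a (x - y) k - 2 * a x k‖ with hg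
  have hgs : Summable g := summable_g x y
  have hbound : ‖lacunary (x + y) + lacunary (x - y) - 2 * lacunary x‖ ≤ ∑' k, g k := by
    rw [main_eq]
    exact norm_tsum_le_tsum_norm hgs
  have hgeom : ∑' k : ℕ, ((1:ℝ)/2) ^ (k + 1) = 1 := by
    simp only [pow_succ]
    rw [tsum_mul_right, tsum_geometric_two]
    norm_num
  refine hbound.trans ?_
  rcases le_or_gt 1 |y| with hy1 | hy1
  · -- |y| ≥ 1 : crude bound by 4
    have h4 : ∑' k, g k ≤ 4 := by
      calc ∑' k, g k ≤ ∑' k : ℕ, 4 * ((1:ℝ)/2) ^ (k + 1) := by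
            refine Summable.tsum_le_tsum (key_le_four x y) hgs ?_
            exact ((summable_geometric_of_lt_one (by norm_num) (by norm_num)).comp_injective
              (add_left_injective 1)).mul_left 4
        _ = 4 := by rw [tsum_mul_left, hgeom]; norm_num
    refine h4.trans ?_
    have : (4:ℝ) * 1 ≤ (8 * Real.pi ^ 2 + 8) * |y| := by
      apply mul_le_mul (by nlinarith [Real.pi_gt_three]) hy1 (by norm_num) (le_of_lt hC)
    linarith
  · -- |y| < 1 : split at N
    have hinv : (1:ℝ) ≤ 1 / |y| := one_le_one_div hy0 hy1.le
    set m : ℕ := ⌊1 / |y|⌋₊ with hm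
    have hm1 : 1 ≤ m := Nat.le_floor (by exact_mod_cast hinv)
    set N : ℕ := Nat.log 2 m with hN
    have h1 : (2:ℝ) ^ N * |y| ≤ 1 := by
      have hpow : (2:ℕ) ^ N ≤ m := Nat.pow_log_le_self 2 (by omega)
      have : ((2:ℝ)) ^ N ≤ 1 / |y| := by
        calc ((2:ℝ)) ^ N = ((2^N : ℕ) : ℝ) := by push_cast; ring
          _ ≤ (m : ℝ) := by exact_mod_cast hpow
          _ ≤ 1 / |y| := Nat.floor_le (by positivity)
      calc (2:ℝ) ^ N * |y| ≤ (1 / |y|) * |y| := by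
            exact mul_le_mul_of_nonneg_right this hy0.le
        _ = 1 := by field_simp
    have h2 : (1:ℝ) ≤ 2 ^ (N + 1) * |y| := by
      have hpow : m < 2 ^ (N + 1) := Nat.lt_pow_succ_log_self (by norm_num) m
      have hlt : 1 / |y| < ((2:ℝ)) ^ (N + 1) := by
        calc 1 / |y| < (m : ℝ) + 1 := Nat.lt_floor_add_one _
          _ ≤ ((2 ^ (N+1) : ℕ) : ℝ) := by exact_mod_cast hpow
          _ = (2:ℝ) ^ (N + 1) := by push_cast; ring
      rw [div_lt_iff₀ hy0] at hlt
      linarith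
    have hsplit := (hgs.sum_add_tsum_nat_add N).symm
    rw [hsplit]
    have hhead : ∑ k ∈ Finset.range N, g k ≤ 8 * Real.pi ^ 2 * |y| := by
      calc ∑ k ∈ Finset.range N, g k
          ≤ ∑ k ∈ Finset.range N, 4 * Real.pi ^ 2 * 2 ^ (k + 1) * y ^ 2 :=
            Finset.sum_le_sum (fun k _ => key_le_sq x y k)
        _ = 8 * Real.pi ^ 2 * y ^ 2 * ∑ k ∈ Finset.range N, (2:ℝ) ^ k := by
            rw [Finset.mul_sum]
            exact Finset.sum_congr rfl (fun k _ => by rw [pow_succ]; ring)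
        _ ≤ 8 * Real.pi ^ 2 * y ^ 2 * 2 ^ N := by
            apply mul_le_mul_of_nonneg_left _ (by positivity)
            have := geom_sum_eq (by norm_num : (2:ℝ) ≠ 1) N
            rw [this]
            have : (0:ℝ) < 2 ^ N := by positivity
            linarith [this]
        _ ≤ 8 * Real.pi ^ 2 * |y| := by
            have hyy : y ^ 2 * 2 ^ N = |y| * (2 ^ N * |y|) := by
              rw [← sq_abs]; ring
            have : y ^ 2 * 2 ^ N ≤ |y| * 1 := by
              rw [hyy]
              exact mul_le_mul_of_nonneg_left h1 hy0.le
            nlinarith [Real.pi_pos]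
    have htail : ∑' k, g (k + N) ≤ 8 * |y| := by
      have hs1 : Summable (fun k => g (k + N)) :=
        hgs.comp_injective (add_left_injective N)
      have hs2 : Summable (fun k : ℕ => (4 * ((1:ℝ)/2) ^ N) * ((1:ℝ)/2) ^ (k + 1)) :=
        ((summable_geometric_of_lt_one (by norm_num) (by norm_num)).comp_injective
          (add_left_injective 1)).mul_left _
      calc ∑' k, g (k + N)
          ≤ ∑' k : ℕ, (4 * ((1:ℝ)/2) ^ N) * ((1:ℝ)/2) ^ (k + 1) := by
            refine Summable.tsum_le_tsum (fun k => ?_) hs1 hs2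
            have := key_le_four x y (k + N)
            calc g (k + N) ≤ 4 * ((1:ℝ)/2) ^ (k + N + 1) := this
              _ = (4 * ((1:ℝ)/2) ^ N) * ((1:ℝ)/2) ^ (k + 1) := by
                  rw [show k + N + 1 = N + (k + 1) by ring, pow_add]; ring
        _ = 4 * ((1:ℝ)/2) ^ N := by rw [tsum_mul_left, hgeom, mul_one]
        _ ≤ 8 * |y| := by
            have : ((1:ℝ)/2) ^ N = ((2:ℝ) ^ N)⁻¹ := by
              rw [one_div, inv_pow]
            have hp : (0:ℝ) < (2:ℝ) ^ N := by positivity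
            rw [pow_succ] at h2
            rw [this, show (4:ℝ) * ((2:ℝ)^N)⁻¹ = 4 / 2 ^ N by ring, div_le_iff₀ hp]
            nlinarith
    calc ∑ k ∈ Finset.range N, g k + ∑' k, g (k + N)
        ≤ 8 * Real.pi ^ 2 * |y| + 8 * |y| := add_le_add hhead htail
      _ = (8 * Real.pi ^ 2 + 8) * |y| := by ring
end

section
/- Let f : ℝ → ℂ be defined by f(x) = Σ_{k=1}^∞ 2^{−k} e^{2πi 2^k x}. Then f is not Lipschitz: there is no constant C such that |f(x+y) − f(x)| ≤ C|y| for all x, y ∈ ℝ. -/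
private lemma lac_term (k : ℕ) (x : ℝ) :
    ((1 : ℂ) / 2) ^ (k + 1) * Complex.exp (2 * Real.pi * Complex.I * (2 : ℂ) ^ (k + 1) * x)
      = (((1/2 : ℝ) ^ (k+1) : ℝ) : ℂ) *
        Complex.exp (((2 * Real.pi * 2 ^ (k+1) * x : ℝ) : ℂ) * Complex.I) := by
  push_cast
  ring_nf

private lemma pow_half_aux (a b : ℕ) : (2:ℝ)^a * (1/2:ℝ)^(a+b) = (1/2:ℝ)^b := by
  rw [pow_add ((1:ℝ)/2) a b, ← mul_assoc, ← mul_pow]; norm_num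

private lemma pow_two_aux (a b : ℕ) : (2:ℝ)^(a+b) * (1/2:ℝ)^b = (2:ℝ)^a := by
  rw [pow_add (2:ℝ) a b, mul_assoc, ← mul_pow]; norm_num

private lemma lac_summable (x : ℝ) :
    Summable (fun k : ℕ => ((1 : ℂ) / 2) ^ (k + 1) *
      Complex.exp (2 * Real.pi * Complex.I * (2 : ℂ) ^ (k + 1) * x)) := by
  apply Summable.of_norm
  have h : ∀ k : ℕ, ‖((1 : ℂ) / 2) ^ (k + 1) *
      Complex.exp (2 * Real.pi * Complex.I * (2 : ℂ) ^ (k + 1) * x)‖ = (1/2 : ℝ)^(k+1) := by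
    intro k
    rw [lac_term, norm_mul, Complex.norm_exp_ofReal_mul_I,
      mul_one, Complex.norm_real, Real.norm_eq_abs, abs_of_nonneg (by positivity)]
  simp only [h]
  simp only [pow_succ]
  exact summable_geometric_two.mul_right _

private lemma lac_im_hasSum (x : ℝ) :
    HasSum (fun k : ℕ => (1/2 : ℝ)^(k+1) * Real.sin (2 * Real.pi * 2^(k+1) * x))
      (lacunary x).im := by
  have h := Complex.hasSum_im ((lac_summable x).hasSum)
  rw [show (∑' k : ℕ, ((1 : ℂ) / 2) ^ (k + 1) *
      Complex.exp (2 * Real.pi * Complex.I * (2 : ℂ) ^ (k + 1) * x)) = lacunary x from rfl] at h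
  refine h.congr_fun fun k => ?_
  rw [lac_term, Complex.mul_im, Complex.exp_ofReal_mul_I_im, Complex.ofReal_im,
    Complex.ofReal_re, zero_mul, add_zero]

private lemma lac_sin_nonneg (n k : ℕ) :
    0 ≤ Real.sin (2 * Real.pi * 2^(k+1) * (1/2 : ℝ)^n) := by
  rcases le_or_gt n (k+1) with h | h
  · have key : (2:ℝ)^(k+1) * (1/2:ℝ)^n = 2^(k+1-n) := by
      have h2 := pow_two_aux (k+1-n) n
      rwa [show k+1-n+n = k+1 by omega] at h2
    rw [mul_assoc, key, show 2 * Real.pi * (2:ℝ)^(k+1-n) = ((2^(k+2-n) : ℕ) : ℝ) * Real.pi by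
      push_cast [show k+2-n = (k+1-n)+1 by omega, pow_succ]; ring]
    rw [Real.sin_nat_mul_pi]
  · have key : (2:ℝ)^(k+1) * (1/2:ℝ)^n = (1/2:ℝ)^(n-(k+1)) := by
      have h2 := pow_half_aux (k+1) (n-(k+1))
      rwa [show k+1+(n-(k+1)) = n by omega] at h2
    rw [mul_assoc, key]
    apply Real.sin_nonneg_of_nonneg_of_le_pi
    · positivity
    · have h1 : (1/2:ℝ)^(n-(k+1)) ≤ (1/2:ℝ)^1 :=
        pow_le_pow_of_le_one (by norm_num) (by norm_num) (by omega)
      nlinarith [Real.pi_pos]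

private lemma lac_term_lb (n k : ℕ) (hk : k < n - 2) (hn : 3 ≤ n) :
    4 * (1/2:ℝ)^n ≤ (1/2 : ℝ)^(k+1) * Real.sin (2 * Real.pi * 2^(k+1) * (1/2:ℝ)^n) := by
  set j := n - (k+1) with hj
  have hj2 : 2 ≤ j := by omega
  have key : (2:ℝ)^(k+1) * (1/2:ℝ)^n = (1/2:ℝ)^j := by
    have h2 := pow_half_aux (k+1) j
    rwa [show k+1+j = n by omega] at h2
  rw [mul_assoc, key]
  have hθ0 : (0:ℝ) ≤ 2 * Real.pi * (1/2:ℝ)^j := by positivity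
  have hθ1 : 2 * Real.pi * (1/2:ℝ)^j ≤ Real.pi / 2 := by
    have h1 : (1/2:ℝ)^j ≤ (1/2:ℝ)^2 :=
      pow_le_pow_of_le_one (by norm_num) (by norm_num) hj2
    nlinarith [Real.pi_pos]
  have hsin := Real.mul_le_sin hθ0 hθ1
  have hpi : 2 / Real.pi * (2 * Real.pi * (1/2:ℝ)^j) = 4 * (1/2:ℝ)^j := by
    field_simp
    ring
  rw [hpi] at hsin
  have hkey2 : (1/2:ℝ)^(k+1) * (4 * (1/2:ℝ)^j) = 4 * (1/2:ℝ)^n := by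
    rw [show n = (k+1) + j by omega, pow_add ((1:ℝ)/2) (k+1) j]; ring
  calc 4 * (1/2:ℝ)^n = (1/2:ℝ)^(k+1) * (4 * (1/2:ℝ)^j) := hkey2.symm
    _ ≤ (1/2:ℝ)^(k+1) * Real.sin (2 * Real.pi * (1/2:ℝ)^j) := by
        apply mul_le_mul_of_nonneg_left hsin (by positivity)

theorem stmt_18 :
    ¬ ∃ C : ℝ, ∀ x y : ℝ, ‖lacunary (x + y) - lacunary x‖ ≤ C * |y| := by
  rintro ⟨C, hC⟩
  obtain ⟨N, hN⟩ := exists_nat_gt C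
  set n := N + 3 with hn
  set y := (1/2:ℝ)^n with hy
  have hy0 : 0 < y := by positivity
  have h1 := hC 0 y
  rw [zero_add, abs_of_pos hy0] at h1
  -- imaginary part at 0 is 0
  have him0 : (lacunary 0).im = 0 := by
    have h := lac_im_hasSum 0
    simp only [mul_zero, Real.sin_zero] at h
    simpa using h.tsum_eq.symm.trans (by simp)
  -- lower bound on the imaginary part at y
  have hS := lac_im_hasSum y
  have hsum_lb : (n - 2 : ℕ) * (4 * (1/2:ℝ)^n) ≤ (lacunary y).im := by
    have h2 : ∑ k ∈ Finset.range (n-2), (1/2 : ℝ)^(k+1) *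
        Real.sin (2 * Real.pi * 2^(k+1) * y) ≤ (lacunary y).im := by
      refine Summable.sum_le_tsum _ (fun k _ => ?_) hS.summable |>.trans_eq hS.tsum_eq
      exact mul_nonneg (by positivity) (lac_sin_nonneg n k)
    refine le_trans ?_ h2
    calc ((n-2 : ℕ) : ℝ) * (4 * (1/2:ℝ)^n)
        = ∑ _k ∈ Finset.range (n-2), (4 * (1/2:ℝ)^n) := by
          rw [Finset.sum_const, Finset.card_range, nsmul_eq_mul]
      _ ≤ ∑ k ∈ Finset.range (n-2), (1/2 : ℝ)^(k+1) *
            Real.sin (2 * Real.pi * 2^(k+1) * y) := by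
          refine Finset.sum_le_sum fun k hk => ?_
          exact lac_term_lb n k (Finset.mem_range.mp hk) (by omega)
  -- the norm bounds the imaginary part
  have him_le : (lacunary y).im ≤ ‖lacunary y - lacunary 0‖ := by
    have : (lacunary y).im = (lacunary y - lacunary 0).im := by
      rw [Complex.sub_im, him0, sub_zero]
    rw [this]
    exact (le_abs_self _).trans (Complex.abs_im_le_norm _)
  have hfinal : ((n-2 : ℕ) : ℝ) * (4 * (1/2:ℝ)^n) ≤ C * y :=
    le_trans hsum_lb (him_le.trans h1)
  have hn2 : ((n-2 : ℕ) : ℝ) = (N : ℝ) + 1 := by push_cast [hn]; norm_num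
  rw [hn2, hy] at hfinal
  have hp : (0:ℝ) < (1/2:ℝ)^n := by positivity
  nlinarith [hN, hp, Nat.cast_nonneg (α := ℝ) N]
end
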